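/- The function h(x) = arctan(x) - (1/x)·ln²(x + √(1+x²)) defined for x > 0 is strictly positive for all x > 0. -/

import Mathlib

open Real

private lemma hasDerivAt_gd (t : ℝ) :
    HasDerivAt (fun s => arctan (Real.sinh s)) (1 / Real.cosh t) t := by
  have h := (Real.hasDerivAt_arctan (Real.sinh t)).comp t (Real.hasDerivAt_sinh t)
  refine h.congr_deriv ?_
  have hc : Real.cosh t ≠ 0 := (Real.cosh_pos t).ne'
  have h2 : 1 + Real.sinh t ^ 2 = Real.cosh t ^ 2 := by
    rw [Real.cosh_sq]; ring
  rw [h2]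
  field_simp

private lemma lemA {t : ℝ} (ht : 0 < t) :
    Real.sinh t / Real.cosh t ^ 2 < arctan (Real.sinh t) := by
  set f : ℝ → ℝ := fun s => arctan (Real.sinh s) - Real.sinh s / Real.cosh s ^ 2 with hf
  have hd : ∀ s : ℝ, HasDerivAt f (2 * Real.sinh s ^ 2 / Real.cosh s ^ 3) s := by
    intro s
    have hc : Real.cosh s ≠ 0 := (Real.cosh_pos s).ne'
    have h2 := (Real.hasDerivAt_sinh s).div ((Real.hasDerivAt_cosh s).pow 2)
      (pow_ne_zero 2 hc)
    refine ((hasDerivAt_gd s).sub h2).congr_deriv ?_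
    simp only [Pi.pow_apply]
    field_simp
    ring
  have hmono : StrictMonoOn f (Set.Ici 0) := by
    apply strictMonoOn_of_deriv_pos (convex_Ici 0)
      (fun s _ => (hd s).continuousAt.continuousWithinAt)
    intro s hs
    rw [interior_Ici] at hs
    rw [(hd s).deriv]
    have h1 : 0 < Real.sinh s := Real.sinh_pos_iff.mpr hs
    have h2 := Real.cosh_pos (x := s)
    positivity
  have h0 : f 0 = 0 := by simp [hf]
  have := hmono Set.self_mem_Ici (Set.mem_Ici.mpr ht.le) ht
  rw [h0] at this
  simpa [hf, sub_pos] using this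

private lemma lemB {t : ℝ} (ht : 0 < t) :
    2 * t < Real.cosh t * arctan (Real.sinh t) + Real.sinh t / Real.cosh t := by
  set g : ℝ → ℝ := fun s =>
    Real.cosh s * arctan (Real.sinh s) + Real.sinh s / Real.cosh s - 2 * s with hg
  have hd : ∀ s : ℝ, HasDerivAt g
      (Real.sinh s * arctan (Real.sinh s) - Real.sinh s ^ 2 / Real.cosh s ^ 2) s := by
    intro s
    have hc : Real.cosh s ≠ 0 := (Real.cosh_pos s).ne'
    have h1 := ((Real.hasDerivAt_cosh s).mul (hasDerivAt_gd s))
    have h2 := (Real.hasDerivAt_sinh s).div (Real.hasDerivAt_cosh s) hc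
    have h3 := ((h1.add h2).sub ((hasDerivAt_id s).const_mul (2:ℝ)))
    refine h3.congr_deriv ?_
    have hsq : Real.cosh s ^ 2 - Real.sinh s ^ 2 = 1 := Real.cosh_sq_sub_sinh_sq s
    field_simp
    nlinarith [hsq]
  have hmono : StrictMonoOn g (Set.Ici 0) := by
    apply strictMonoOn_of_deriv_pos (convex_Ici 0)
      (fun s _ => (hd s).continuousAt.continuousWithinAt)
    intro s hs
    rw [interior_Ici] at hs
    rw [(hd s).deriv]
    have h1 : 0 < Real.sinh s := Real.sinh_pos_iff.mpr hs
    have h2 := lemA hs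
    have h3 : Real.sinh s * (Real.sinh s / Real.cosh s ^ 2) <
        Real.sinh s * arctan (Real.sinh s) := by
      exact mul_lt_mul_of_pos_left h2 h1
    have : Real.sinh s * (Real.sinh s / Real.cosh s ^ 2)
        = Real.sinh s ^ 2 / Real.cosh s ^ 2 := by ring
    linarith [this ▸ h3]
  have h0 : g 0 = 0 := by simp [hg]
  have := hmono Set.self_mem_Ici (Set.mem_Ici.mpr ht.le) ht
  rw [h0] at this
  simp only [hg, sub_pos] at this
  linarith

private lemma lemC {t : ℝ} (ht : 0 < t) :
    t ^ 2 < Real.sinh t * arctan (Real.sinh t) := by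
  set F : ℝ → ℝ := fun s => Real.sinh s * arctan (Real.sinh s) - s ^ 2 with hF
  have hd : ∀ s : ℝ, HasDerivAt F
      (Real.cosh s * arctan (Real.sinh s) + Real.sinh s / Real.cosh s - 2 * s) s := by
    intro s
    have hc : Real.cosh s ≠ 0 := (Real.cosh_pos s).ne'
    have h1 := ((Real.hasDerivAt_sinh s).mul (hasDerivAt_gd s))
    have h2 := (hasDerivAt_pow 2 s)
    refine (h1.sub h2).congr_deriv ?_
    field_simp
    norm_num
  have hmono : StrictMonoOn F (Set.Ici 0) := by
    apply strictMonoOn_of_deriv_pos (convex_Ici 0)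
      (fun s _ => (hd s).continuousAt.continuousWithinAt)
    intro s hs
    rw [interior_Ici] at hs
    rw [(hd s).deriv]
    linarith [lemB hs]
  have h0 : F 0 = 0 := by simp [hF]
  have := hmono Set.self_mem_Ici (Set.mem_Ici.mpr ht.le) ht
  rw [h0] at this
  simpa [hF, sub_pos] using this

theorem arctan_sub_arsinh_sq_pos (x : ℝ) (hx : 0 < x) :
    0 < arctan x - (1 / x) * Real.log (x + Real.sqrt (1 + x ^ 2)) ^ 2 := by
  have hlog : Real.log (x + Real.sqrt (1 + x ^ 2)) = Real.arsinh x := rfl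
  rw [hlog]
  have ht : 0 < Real.arsinh x := Real.arsinh_pos_iff.mpr hx
  have h := lemC ht
  rw [Real.sinh_arsinh] at h
  rw [sub_pos, one_div, ← div_eq_inv_mul, div_lt_iff₀ hx]
  linarith [h]
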